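/- Let T > 0 and let Δ = {(t₁,t₂) ∈ ℝ² : 0 ≤ t₁ ≤ t₂ ≤ T}. Let m : Δ → [0,∞) be non-increasing in t₁, non-decreasing in t₂, with m(t,t) = 0 for all t ∈ [0,T], m(0,T) ≤ 1, and Hölder continuous: |m(t₁,t₂) − m(s₁,s₂)| ≤ C|t₁−s₁|^r + C|t₂−s₂|^r for some C, r > 0. Then for any positive integer n there exists a finite set Δ* ⊆ Δ of cardinality K ≤ (2n−1)·T·(Cn)^{1/r} + 1 such that for every (t₁,t₂) ∈ Δ there exists (s₁,s₂) ∈ Δ* with s₁ ≤ t₁, t₂ ≤ s₂, and m(s₁,s₂) − 2/n ≤ m(t₁,t₂); and moreover either m(t₁,t₂) ≤ 1/n or there exists (u₁,u₂) ∈ Δ* with t₁ ≤ u₁, u₂ ≤ t₂, and m(t₁,t₂) ≤ m(u₁,u₂) + 2/n. -/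

import Mathlib

set_option maxHeartbeats 1000000

def Tri (T : ℝ) : Set (ℝ × ℝ) := {p | 0 ≤ p.1 ∧ p.1 ≤ p.2 ∧ p.2 ≤ T}

def MemD (T : ℝ) (z : ℝ → ℝ → ℝ) : Prop :=
  (∀ s₁ t₁ t₂, 0 ≤ s₁ → s₁ ≤ t₁ → t₁ ≤ t₂ → t₂ ≤ T → z t₁ t₂ ≤ z s₁ t₂) ∧
  (∀ t₁ s₂ t₂, 0 ≤ t₁ → t₁ ≤ s₂ → s₂ ≤ t₂ → t₂ ≤ T → z t₁ s₂ ≤ z t₁ t₂) ∧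
  (∀ t, 0 ≤ t → t ≤ T → z t t = 0)

noncomputable def tauF (T : ℝ) (m : ℝ → ℝ → ℝ) (c y : ℝ) : ℝ :=
  sSup ({t | t ∈ Set.Icc c T ∧ m c t ≤ y} ∪ {c})

section aux

variable {T C r c y : ℝ} {m : ℝ → ℝ → ℝ}

lemma tau_bdd (T : ℝ) (m : ℝ → ℝ → ℝ) (c y : ℝ) :
    BddAbove ({t | t ∈ Set.Icc c T ∧ m c t ≤ y} ∪ {c}) := by
  refine ⟨max T c, ?_⟩
  rintro t (⟨⟨_, h2⟩, _⟩ | rfl)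
  · exact le_max_of_le_left h2
  · exact le_max_right _ _

lemma tau_ne (T : ℝ) (m : ℝ → ℝ → ℝ) (c y : ℝ) :
    ({t | t ∈ Set.Icc c T ∧ m c t ≤ y} ∪ {c}).Nonempty := ⟨c, Or.inr rfl⟩

lemma le_tau {t : ℝ} (h1 : c ≤ t) (h2 : t ≤ T) (h3 : m c t ≤ y) : t ≤ tauF T m c y :=
  le_csSup (tau_bdd T m c y) (Or.inl ⟨⟨h1, h2⟩, h3⟩)

lemma tau_ge_self : c ≤ tauF T m c y := le_csSup (tau_bdd T m c y) (Or.inr rfl)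

lemma tau_le_T (hcT : c ≤ T) : tauF T m c y ≤ T := by
  refine csSup_le (tau_ne T m c y) ?_
  rintro t (⟨⟨_, h⟩, _⟩ | rfl)
  · exact h
  · exact hcT

lemma tau_le_of_lt (hm : MemD T m) (h0c : 0 ≤ c) {t : ℝ} (hct : c ≤ t) (htT : t ≤ T)
    (hyt : y < m c t) : tauF T m c y ≤ t := by
  refine csSup_le (tau_ne T m c y) ?_
  rintro s (⟨⟨hs1, hs2⟩, hs3⟩ | rfl)
  · by_contra hlt
    push_neg at hlt
    exact absurd (hm.2.1 c t s h0c hct hlt.le hs2) (by linarith)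
  · exact hct

lemma m_nonneg (hm : MemD T m) {t₁ t₂ : ℝ} (h0 : 0 ≤ t₁) (h12 : t₁ ≤ t₂) (h2T : t₂ ≤ T) :
    0 ≤ m t₁ t₂ := by
  have h := hm.1 t₁ t₂ t₂ h0 h12 le_rfl h2T
  rw [hm.2.2 t₂ (h0.trans h12) h2T] at h
  exact h

lemma m_le_one (hm : MemD T m) (hm1 : m 0 T ≤ 1) {t₁ t₂ : ℝ} (h0 : 0 ≤ t₁) (h12 : t₁ ≤ t₂)
    (h2T : t₂ ≤ T) : m t₁ t₂ ≤ 1 :=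
  le_trans (le_trans (hm.1 0 t₁ t₂ le_rfl h0 h12 h2T)
    (hm.2.1 0 t₂ T le_rfl (h0.trans h12) h2T le_rfl)) hm1

lemma pow_aux (hC : 0 < C) (hr : 0 < r) {e : ℝ} (he : 0 < e) :
    C * ((e / (2 * C)) ^ (1 / r : ℝ)) ^ (r : ℝ) = e / 2 := by
  rw [← Real.rpow_mul (by positivity), one_div_mul_cancel hr.ne', Real.rpow_one]
  field_simp

lemma tau_val_le (hC : 0 < C) (hr : 0 < r) (hm : MemD T m)
    (hH : ∀ p q : ℝ × ℝ, p ∈ Tri T → q ∈ Tri T →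
      |m p.1 p.2 - m q.1 q.2| ≤ C * |p.1 - q.1| ^ r + C * |p.2 - q.2| ^ r)
    (h0c : 0 ≤ c) (hcT : c ≤ T) (hy : 0 ≤ y) : m c (tauF T m c y) ≤ y := by
  by_contra hlt
  push_neg at hlt
  set τ := tauF T m c y with hτ
  have hτc : c ≤ τ := tau_ge_self
  have hτT : τ ≤ T := tau_le_T hcT
  have hτTri : (c, τ) ∈ Tri T := ⟨h0c, hτc, hτT⟩
  set ε := m c τ - y with hε
  have hεpos : 0 < ε := by simp only [hε]; linarith
  set h' := (ε / (2 * C)) ^ (1 / r : ℝ) with hh'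
  have hh'pos : 0 < h' := Real.rpow_pos_of_pos (by positivity) _
  have hh'r : C * h' ^ (r : ℝ) = ε / 2 := pow_aux hC hr hεpos
  have key : ∀ s ∈ ({t | t ∈ Set.Icc c T ∧ m c t ≤ y} ∪ {c} : Set ℝ), s ≤ max c (τ - h') := by
    rintro s (⟨⟨hs1, hs2⟩, hs3⟩ | rfl)
    · refine le_max_of_le_right ?_
      by_contra hgt
      push_neg at hgt
      have hsτ : s ≤ τ := le_tau hs1 hs2 hs3
      have hhol := hH (c, s) (c, τ) ⟨h0c, hs1, hs2⟩ hτTri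
      simp only [sub_self, abs_zero, Real.zero_rpow hr.ne', mul_zero, zero_add] at hhol
      have h2 : m c τ - m c s ≤ |m c s - m c τ| := by rw [abs_sub_comm]; exact le_abs_self _
      have habs : |s - τ| ^ (r : ℝ) ≤ h' ^ (r : ℝ) := by
        apply Real.rpow_le_rpow (abs_nonneg _) _ hr.le
        rw [abs_sub_comm, abs_of_nonneg (by linarith)]
        linarith
      have h3 : C * |s - τ| ^ (r : ℝ) ≤ ε / 2 := by
        calc C * |s - τ| ^ (r : ℝ) ≤ C * h' ^ (r : ℝ) :=
              mul_le_mul_of_nonneg_left habs hC.le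
          _ = ε / 2 := hh'r
      have : y + ε / 2 ≤ m c s := by simp only [hε] at h3 ⊢; linarith
      linarith
    · exact le_max_left _ _
  have hsup : τ ≤ max c (τ - h') := csSup_le (tau_ne T m c y) key
  rcases le_max_iff.mp hsup with h | h
  · have hτeq : τ = c := le_antisymm h hτc
    rw [hτeq, hm.2.2 c h0c hcT] at hlt
    linarith
  · linarith

lemma tau_val_ge (hC : 0 < C) (hr : 0 < r) (hm : MemD T m)
    (hH : ∀ p q : ℝ × ℝ, p ∈ Tri T → q ∈ Tri T →
      |m p.1 p.2 - m q.1 q.2| ≤ C * |p.1 - q.1| ^ r + C * |p.2 - q.2| ^ r)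
    (h0c : 0 ≤ c) (hlt : tauF T m c y < T) : y ≤ m c (tauF T m c y) := by
  by_contra h
  push_neg at h
  set τ := tauF T m c y with hτ
  have hτc : c ≤ τ := tau_ge_self
  set ε := y - m c τ with hε
  have hεpos : 0 < ε := by simp only [hε]; linarith
  set h' := (ε / (2 * C)) ^ (1 / r : ℝ) with hh'
  have hh'pos : 0 < h' := Real.rpow_pos_of_pos (by positivity) _
  have hh'r : C * h' ^ (r : ℝ) = ε / 2 := pow_aux hC hr hεpos
  set t' := min T (τ + h') with ht'
  have ht'1 : τ < t' := lt_min hlt (by linarith)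
  have ht'T : t' ≤ T := min_le_left _ _
  have hct' : c ≤ t' := le_trans hτc ht'1.le
  have hd : t' - τ ≤ h' := by
    have := min_le_right T (τ + h')
    simp only [ht'] at *
    linarith
  have hhol := hH (c, t') (c, τ) ⟨h0c, hct', ht'T⟩ ⟨h0c, hτc, hlt.le⟩
  simp only [sub_self, abs_zero, Real.zero_rpow hr.ne', mul_zero, zero_add] at hhol
  have habs : |t' - τ| ^ (r : ℝ) ≤ h' ^ (r : ℝ) := by
    apply Real.rpow_le_rpow (abs_nonneg _) _ hr.le
    rw [abs_of_nonneg (by linarith)]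
    exact hd
  have h3 : C * |t' - τ| ^ (r : ℝ) ≤ ε / 2 := by
    calc C * |t' - τ| ^ (r : ℝ) ≤ C * h' ^ (r : ℝ) := mul_le_mul_of_nonneg_left habs hC.le
      _ = ε / 2 := hh'r
  have h4 : m c t' - m c τ ≤ |m c t' - m c τ| := le_abs_self _
  have h5 : m c t' ≤ y - ε / 2 := by simp only [hε] at h3 ⊢; linarith
  have h6 : t' ≤ τ := le_tau hct' ht'T (by linarith)
  linarith

lemma m_le_gap (hC : 0 < C) (hr : 0 < r) (hm : MemD T m)
    (hH : ∀ p q : ℝ × ℝ, p ∈ Tri T → q ∈ Tri T →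
      |m p.1 p.2 - m q.1 q.2| ≤ C * |p.1 - q.1| ^ r + C * |p.2 - q.2| ^ r)
    {t₁ t₂ : ℝ} (h0 : 0 ≤ t₁) (h12 : t₁ ≤ t₂) (h2T : t₂ ≤ T) :
    m t₁ t₂ ≤ C * (t₂ - t₁) ^ r := by
  have h := hH (t₁, t₂) (t₂, t₂) ⟨h0, h12, h2T⟩ ⟨h0.trans h12, le_rfl, h2T⟩
  simp only [sub_self, abs_zero, Real.zero_rpow hr.ne', mul_zero, add_zero] at h
  rw [hm.2.2 t₂ (h0.trans h12) h2T, sub_zero] at h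
  have habs : |t₁ - t₂| = t₂ - t₁ := by
    rw [abs_sub_comm, abs_of_nonneg (sub_nonneg.mpr h12)]
  rw [habs] at h
  exact (le_abs_self _).trans h

lemma holder_fst (hC : 0 < C) (hr : 0 < r)
    (hH : ∀ p q : ℝ × ℝ, p ∈ Tri T → q ∈ Tri T →
      |m p.1 p.2 - m q.1 q.2| ≤ C * |p.1 - q.1| ^ r + C * |p.2 - q.2| ^ r)
    {c t₁ t₂ d : ℝ} (h0c : 0 ≤ c) (hct : c ≤ t₂) (h0t : 0 ≤ t₁) (ht12 : t₁ ≤ t₂)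
    (h2T : t₂ ≤ T) (hd : |c - t₁| ≤ d) : |m c t₂ - m t₁ t₂| ≤ C * d ^ r := by
  have h := hH (c, t₂) (t₁, t₂) ⟨h0c, hct, h2T⟩ ⟨h0t, ht12, h2T⟩
  simp only [sub_self, abs_zero, Real.zero_rpow hr.ne', mul_zero, add_zero] at h
  refine h.trans (mul_le_mul_of_nonneg_left (Real.rpow_le_rpow (abs_nonneg _) hd hr.le) hC.le)

end aux

theorem finite_gate_set
    (T : ℝ) (hT : 0 < T) (m : ℝ → ℝ → ℝ) (C r : ℝ) (hC : 0 < C) (hr : 0 < r)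
    (hm : MemD T m) (hm1 : m 0 T ≤ 1)
    (hHolder : ∀ p q : ℝ × ℝ, p ∈ Tri T → q ∈ Tri T →
      |m p.1 p.2 - m q.1 q.2| ≤ C * |p.1 - q.1| ^ r + C * |p.2 - q.2| ^ r)
    (n : ℕ) (hn : 0 < n) :
    ∃ Δstar : Finset (ℝ × ℝ), ↑Δstar ⊆ Tri T ∧
      (Δstar.card : ℝ) ≤ (2 * n - 1) * T * (C * n) ^ (1 / r) + 1 ∧
      ∀ p ∈ Tri T,
        (∃ s ∈ Δstar, s.1 ≤ p.1 ∧ p.2 ≤ s.2 ∧ m s.1 s.2 - 2 / n ≤ m p.1 p.2) ∧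
        (m p.1 p.2 ≤ 1 / n ∨
          ∃ u ∈ Δstar, p.1 ≤ u.1 ∧ u.2 ≤ p.2 ∧ m p.1 p.2 ≤ m u.1 u.2 + 2 / n) := by
  have hn0 : (0 : ℝ) < n := by exact_mod_cast hn
  have hn1 : (1 : ℝ) ≤ n := by exact_mod_cast hn
  have hCn : (0 : ℝ) < C * n := by positivity
  set δ : ℝ := ((C * n) ^ (1 / r : ℝ))⁻¹ with hδdef
  have hδpos : 0 < δ := by
    rw [hδdef]
    exact inv_pos.mpr (Real.rpow_pos_of_pos hCn _)
  have hδr : C * δ ^ (r : ℝ) = 1 / n := by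
    rw [hδdef, ← Real.inv_rpow hCn.le, ← Real.rpow_mul (inv_pos.mpr hCn).le,
      one_div_mul_cancel hr.ne', Real.rpow_one]
    field_simp
  have hXeq : T * (C * n) ^ (1 / r : ℝ) = T / δ := by
    field_simp [hδdef]
    rw [hδdef]; exact mul_inv_cancel₀ (Real.rpow_pos_of_pos hCn _).ne'
  have hpow : (0 : ℝ) < (C * n) ^ (1 / r : ℝ) := Real.rpow_pos_of_pos hCn _
  rcases lt_or_ge T δ with hTδ | hδT
  · -- trivial case : T < δ, i.e. m ≤ 1/n everywhere
    refine ⟨{((0 : ℝ), T)}, ?_, ?_, ?_⟩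
    · intro q hq
      simp only [Finset.coe_singleton, Set.mem_singleton_iff] at hq
      rw [hq]
      exact ⟨le_rfl, hT.le, le_rfl⟩
    · simp only [Finset.card_singleton, Nat.cast_one]
      nlinarith [hpow, hT, hn1, mul_pos hT hpow]
    · intro p hp
      obtain ⟨t₁, t₂⟩ := p
      obtain ⟨h0, h12, h2T⟩ := hp
      dsimp only at h0 h12 h2T ⊢
      have hsmall : ∀ a b : ℝ, 0 ≤ a → a ≤ b → b ≤ T → m a b ≤ 1 / n := by
        intro a b ha hab hbT
        have h1 := m_le_gap hC hr hm hHolder ha hab hbT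
        have h2 : C * (b - a) ^ (r : ℝ) ≤ C * δ ^ (r : ℝ) := by
          refine mul_le_mul_of_nonneg_left (Real.rpow_le_rpow (by linarith) (by linarith) hr.le) hC.le
        rw [hδr] at h2
        linarith
      constructor
      · refine ⟨((0 : ℝ), T), Finset.mem_singleton_self _, h0, h2T, ?_⟩
        have h1 := hsmall 0 T le_rfl hT.le le_rfl
        have h2 := m_nonneg hm h0 h12 h2T
        have h3 : (0 : ℝ) < 1 / n := by positivity
        have h4 : 2 / (n : ℝ) = 2 * (1 / n) := by ring
        dsimp only
        linarith
      · exact Or.inl (hsmall t₁ t₂ h0 h12 h2T)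
  · -- main case : δ ≤ T
    have hx1 : (1 : ℝ) ≤ T / δ := (one_le_div hδpos).mpr hδT
    set J := ⌊T / δ⌋₊ with hJdef
    have hJ1 : 1 ≤ J := by
      rw [hJdef]
      exact Nat.le_floor (by exact_mod_cast hx1)
    have hJx : (J : ℝ) ≤ T / δ := Nat.floor_le (by positivity)
    set pt : ℕ × ℕ → ℝ × ℝ := fun q =>
      if q.1 = 0 then ((0 : ℝ), tauF T m 0 (((q.2 : ℝ) + 1) / n))
      else ((q.1 : ℝ) * δ, tauF T m ((q.1 : ℝ) * δ) ((q.2 : ℝ) / n)) with hpt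
    refine ⟨(Finset.range (J + 1) ×ˢ Finset.range n).image pt, ?_, ?_, ?_⟩
    · -- subset of Tri
      intro q hq
      simp only [Finset.coe_image, Set.mem_image, Finset.mem_coe, Finset.mem_product,
        Finset.mem_range] at hq
      obtain ⟨⟨j, k⟩, ⟨hj, hk⟩, rfl⟩ := hq
      simp only [hpt]
      by_cases hj0 : j = 0
      · rw [if_pos hj0]
        exact ⟨le_rfl, tau_ge_self, tau_le_T hT.le⟩
      · rw [if_neg hj0]
        have hcT : (j : ℝ) * δ ≤ T := by
          have h1 : (j : ℝ) ≤ J := by exact_mod_cast Nat.lt_succ_iff.mp hj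
          have : (j : ℝ) ≤ T / δ := h1.trans hJx
          calc (j : ℝ) * δ ≤ T / δ * δ := by nlinarith
            _ = T := div_mul_cancel₀ T hδpos.ne'
        exact ⟨by positivity, tau_ge_self, tau_le_T hcT⟩
    · -- cardinality
      have hcard : ((Finset.range (J + 1) ×ˢ Finset.range n).image pt).card ≤ (J + 1) * n := by
        refine Finset.card_image_le.trans ?_
        rw [Finset.card_product, Finset.card_range, Finset.card_range]
      have h1 : (((J + 1) * n : ℕ) : ℝ) ≤ (2 * n - 1) * T * (C * n) ^ (1 / r : ℝ) + 1 := by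
        have h2 : (2 * (n : ℝ) - 1) * T * (C * n) ^ (1 / r : ℝ) = (2 * n - 1) * (T / δ) := by
          rw [mul_assoc, hXeq]
        rw [h2]
        push_cast
        nlinarith [hJx, hx1, hn1, mul_nonneg (sub_nonneg.mpr hn1) (sub_nonneg.mpr hx1)]
      calc (((Finset.range (J + 1) ×ˢ Finset.range n).image pt).card : ℝ)
          ≤ (((J + 1) * n : ℕ) : ℝ) := by exact_mod_cast hcard
        _ ≤ _ := h1
    · -- coverage
      intro p hp
      obtain ⟨t₁, t₂⟩ := p
      obtain ⟨h0, h12, h2T⟩ := hp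
      dsimp only at h0 h12 h2T ⊢
      constructor
      · -- condition 1
        have hjnJ : ⌊t₁ / δ⌋₊ ≤ J := Nat.floor_mono ((div_le_div_iff_of_pos_right hδpos).mpr (h12.trans h2T))
        set jn := ⌊t₁ / δ⌋₊ with hjn
        have hc0 : (0:ℝ) ≤ (jn:ℝ) * δ := by positivity
        have hct₁ : (jn:ℝ) * δ ≤ t₁ := by
          have h1 : (jn:ℝ) ≤ t₁ / δ := Nat.floor_le (by positivity)
          calc (jn:ℝ) * δ ≤ t₁ / δ * δ := by nlinarith
            _ = t₁ := div_mul_cancel₀ t₁ hδpos.ne'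
        have hshift : t₁ - (jn:ℝ) * δ ≤ δ := by
          have h1 : t₁ / δ < (jn:ℝ) + 1 := Nat.lt_floor_add_one _
          have h2 : t₁ < ((jn:ℝ) + 1) * δ := by
            calc t₁ = t₁ / δ * δ := (div_mul_cancel₀ t₁ hδpos.ne').symm
              _ < ((jn:ℝ) + 1) * δ := by nlinarith
          linarith
        set c := (jn:ℝ) * δ with hc
        have hct₂ : c ≤ t₂ := hct₁.trans h12
        have hcT : c ≤ T := hct₂.trans h2T
        have ha₁0 : 0 ≤ m c t₂ := m_nonneg hm hc0 hct₂ h2T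
        have ha₁1 : m c t₂ ≤ 1 := m_le_one hm hm1 hc0 hct₂ h2T
        have hhabs : |m c t₂ - m t₁ t₂| ≤ 1 / n := by
          have h1 := holder_fst hC hr hHolder (d := δ) hc0 hct₂ h0 h12 h2T (by
            rw [abs_sub_comm, abs_of_nonneg (by linarith)]; linarith)
          rw [hδr] at h1
          exact h1
        have hub : m c t₂ ≤ m t₁ t₂ + 1 / n := by
          have := (abs_le.mp hhabs).2; linarith
        have hlb : m t₁ t₂ ≤ m c t₂ + 1 / n := by
          have := (abs_le.mp hhabs).1; linarith
        set k := max 1 ⌈(n:ℝ) * m c t₂⌉₊ with hk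
        have hk1 : 1 ≤ k := le_max_left _ _
        have hkn : k ≤ n := max_le hn (Nat.ceil_le.mpr (by nlinarith))
        have hlev1 : m c t₂ ≤ (k:ℝ) / n := by
          rw [le_div_iff₀ hn0]
          have h1 : (n:ℝ) * m c t₂ ≤ (⌈(n:ℝ) * m c t₂⌉₊ : ℝ) := Nat.le_ceil _
          have h2 : ((⌈(n:ℝ) * m c t₂⌉₊ : ℕ) : ℝ) ≤ (k:ℝ) := by
            exact_mod_cast le_max_right 1 ⌈(n:ℝ) * m c t₂⌉₊
          nlinarith
        have hlev2 : (k:ℝ) / n ≤ m c t₂ + 1 / n := by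
          rw [div_le_iff₀ hn0]
          have h2 : (k:ℝ) ≤ (n:ℝ) * m c t₂ + 1 := by
            rcases max_choice 1 ⌈(n:ℝ) * m c t₂⌉₊ with h | h
            · rw [hk, h]; push_cast; nlinarith
            · rw [hk, h]
              have := Nat.ceil_lt_add_one (by positivity : (0:ℝ) ≤ (n:ℝ) * m c t₂)
              linarith
          have h3 : (m c t₂ + 1/n) * n = (n:ℝ) * m c t₂ + 1 := by field_simp
          linarith
        have h2div : 2 / (n:ℝ) = 1/n + 1/n := by ring
        by_cases hjn0 : jn = 0
        · -- column 0
          have hc00 : c = 0 := by rw [hc, hjn0]; norm_num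
          have hpteq : pt (0, k - 1) = ((0:ℝ), tauF T m 0 ((k:ℝ)/n)) := by
            have h1 : ((k - 1 : ℕ) : ℝ) + 1 = (k : ℝ) := by
              rw [Nat.cast_sub hk1]; push_cast; ring
            simp [hpt, h1]
          have hmem : pt (0, k - 1) ∈ (Finset.range (J + 1) ×ˢ Finset.range n).image pt :=
            Finset.mem_image_of_mem pt (Finset.mem_product.mpr
              ⟨Finset.mem_range.mpr (Nat.succ_pos J), Finset.mem_range.mpr (by omega)⟩)
          rw [hpteq] at hmem
          refine ⟨((0:ℝ), tauF T m 0 ((k:ℝ)/n)), hmem, h0, ?_, ?_⟩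
          · exact le_tau (h0.trans h12) h2T (by rw [← hc00]; exact hlev1)
          · have hval : m 0 (tauF T m 0 ((k:ℝ)/n)) ≤ (k:ℝ)/n :=
              tau_val_le hC hr hm hHolder le_rfl hT.le (by positivity)
            dsimp only
            rw [← hc00] at *
            linarith
        · by_cases hklt : k < n
          · -- interior column, interior level
            have hpteq : pt (jn, k) = (c, tauF T m c ((k:ℝ)/n)) := by
              rw [hc]
              simp [hpt, hjn0]
            have hmem : pt (jn, k) ∈ (Finset.range (J + 1) ×ˢ Finset.range n).image pt :=
              Finset.mem_image_of_mem pt (Finset.mem_product.mpr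
                ⟨Finset.mem_range.mpr (by omega), Finset.mem_range.mpr hklt⟩)
            rw [hpteq] at hmem
            refine ⟨(c, tauF T m c ((k:ℝ)/n)), hmem, hct₁, ?_, ?_⟩
            · exact le_tau hct₂ h2T hlev1
            · have hval : m c (tauF T m c ((k:ℝ)/n)) ≤ (k:ℝ)/n :=
                tau_val_le hC hr hm hHolder hc0 hcT (by positivity)
              dsimp only
              linarith
          · -- k = n : use the top point (0, T-level)
            have hkeqn : k = n := le_antisymm hkn (not_lt.mp hklt)
            have hy1 : (((n - 1 : ℕ) : ℝ) + 1) / n = 1 := by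
              rw [Nat.cast_sub hn]
              push_cast
              field_simp
              ring
            have hpteq : pt (0, n - 1) = ((0:ℝ), tauF T m 0 1) := by
              simp [hpt, hy1]
            have hmem : pt (0, n - 1) ∈ (Finset.range (J + 1) ×ˢ Finset.range n).image pt :=
              Finset.mem_image_of_mem pt (Finset.mem_product.mpr
                ⟨Finset.mem_range.mpr (Nat.succ_pos J), Finset.mem_range.mpr (by omega)⟩)
            rw [hpteq] at hmem
            refine ⟨((0:ℝ), tauF T m 0 1), hmem, h0, ?_, ?_⟩
            · exact le_tau (h0.trans h12) h2T (m_le_one hm hm1 le_rfl (h0.trans h12) h2T)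
            · have hval : m 0 (tauF T m 0 1) ≤ 1 :=
                m_le_one hm hm1 le_rfl tau_ge_self (tau_le_T hT.le)
              dsimp only
              have hgoal : 1 ≤ m t₁ t₂ + 2 / n := by
                rcases eq_or_lt_of_le (show 1 ≤ n from hn) with hne1 | hge2
                · have hcast1 : (n:ℝ) = 1 := by exact_mod_cast hne1.symm
                  have h2n : 2 / (n:ℝ) = 2 := by rw [hcast1]; norm_num
                  have := m_nonneg hm h0 h12 h2T
                  linarith
                · have hge2' : 2 ≤ n := hge2
                  have hceq : ⌈(n:ℝ) * m c t₂⌉₊ = n := by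
                    rcases max_choice 1 ⌈(n:ℝ) * m c t₂⌉₊ with h | h
                    · rw [hk, h] at hkeqn; omega
                    · rw [hk, h] at hkeqn; exact hkeqn
                  have hcast : ((n - 1 : ℕ) : ℝ) < (n:ℝ) * m c t₂ := by
                    rw [← Nat.lt_ceil, hceq]
                    omega
                  have hcast2 : ((n - 1 : ℕ) : ℝ) = (n:ℝ) - 1 := by
                    rw [Nat.cast_sub hn]; push_cast; ring
                  rw [hcast2] at hcast
                  rw [← mul_le_mul_iff_right₀ hn0]
                  have he1 : (n:ℝ) * (m t₁ t₂ + 2/n) = n * m t₁ t₂ + 2 := by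
                    field_simp
                  have he2 : (n:ℝ) * (m c t₂) ≤ n * (m t₁ t₂ + 1/n) :=
                    mul_le_mul_of_nonneg_left hub hn0.le
                  have he3 : (n:ℝ) * (m t₁ t₂ + 1/n) = n * m t₁ t₂ + 1 := by
                    field_simp
                  rw [he1, mul_one]
                  linarith
              linarith
      · -- condition 2
        by_cases hsmall : m t₁ t₂ ≤ 1 / n
        · exact Or.inl hsmall
        right
        push_neg at hsmall
        have hn1p : (0:ℝ) < 1/n := by positivity
        have h2div : 2 / (n:ℝ) = 1/n + 1/n := by ring
        have hgap : m t₁ t₂ ≤ C * (t₂ - t₁) ^ (r:ℝ) := m_le_gap hC hr hm hHolder h0 h12 h2T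
        have hd : δ < t₂ - t₁ := by
          by_contra hdc
          push_neg at hdc
          have h1 : C * (t₂ - t₁) ^ (r:ℝ) ≤ C * δ ^ (r:ℝ) :=
            mul_le_mul_of_nonneg_left (Real.rpow_le_rpow (by linarith) hdc hr.le) hC.le
          rw [hδr] at h1
          linarith
        have hceilJ : ⌈t₁ / δ⌉₊ ≤ J := by
          refine Nat.ceil_le.mpr ?_
          have h1 : t₁ ≤ T - δ := by linarith
          have h2 : t₁ / δ ≤ (T - δ) / δ := (div_le_div_iff_of_pos_right hδpos).mpr h1
          have h3 : (T - δ) / δ = T / δ - 1 := by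
            rw [sub_div, div_self hδpos.ne']
          have h4 : T / δ < (J:ℝ) + 1 := Nat.lt_floor_add_one _
          linarith
        set j' := max 1 ⌈t₁ / δ⌉₊ with hj'
        have hj'J : j' ≤ J := max_le hJ1 hceilJ
        have hj'1 : 1 ≤ j' := le_max_left _ _
        have hj'0 : ¬ j' = 0 := by omega
        set c' := (j' : ℝ) * δ with hc'
        have hc'1 : t₁ ≤ c' := by
          have h1 : t₁ / δ ≤ (⌈t₁ / δ⌉₊ : ℝ) := Nat.le_ceil _
          have h2 : ((⌈t₁ / δ⌉₊ : ℕ) : ℝ) ≤ (j' : ℝ) := by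
            exact_mod_cast le_max_right 1 ⌈t₁ / δ⌉₊
          calc t₁ = t₁ / δ * δ := (div_mul_cancel₀ t₁ hδpos.ne').symm
            _ ≤ (j':ℝ) * δ := by nlinarith
        have hc'2 : c' ≤ t₁ + δ := by
          have h1 : (j' : ℝ) ≤ t₁ / δ + 1 := by
            rw [hj', Nat.cast_max]
            refine max_le ?_ ?_
            · have h5 : (0:ℝ) ≤ t₁/δ := by positivity
              push_cast
              linarith
            · exact (Nat.ceil_lt_add_one (by positivity)).le
          have h2 : (t₁/δ + 1) * δ = t₁ + δ := by field_simp
          calc c' = (j':ℝ) * δ := hc'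
            _ ≤ (t₁/δ + 1) * δ := by nlinarith
            _ = t₁ + δ := h2
        have hc't₂ : c' ≤ t₂ := by linarith
        have hc'T : c' ≤ T := hc't₂.trans h2T
        have h0c' : 0 ≤ c' := h0.trans hc'1
        have habs2 : |m c' t₂ - m t₁ t₂| ≤ 1 / n := by
          have h1 := holder_fst hC hr hHolder (d := δ) h0c' hc't₂ h0 h12 h2T (by
            rw [abs_of_nonneg (by linarith)]; linarith)
          rw [hδr] at h1
          exact h1
        have hub2 : m c' t₂ ≤ m t₁ t₂ + 1/n := by have := (abs_le.mp habs2).2; linarith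
        have hlb2 : m t₁ t₂ ≤ m c' t₂ + 1/n := by have := (abs_le.mp habs2).1; linarith
        have ha₂pos : (0:ℝ) < m c' t₂ := by linarith
        have ha₂1 : m c' t₂ ≤ 1 := m_le_one hm hm1 h0c' hc't₂ h2T
        by_cases hsub : m c' t₂ ≤ 1/n
        · -- zero point
          have hpteq : pt (j', 0) = (c', tauF T m c' 0) := by
            rw [hc']
            simp [hpt, hj'0]
          have hmem : pt (j', 0) ∈ (Finset.range (J + 1) ×ˢ Finset.range n).image pt :=
            Finset.mem_image_of_mem pt (Finset.mem_product.mpr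
              ⟨Finset.mem_range.mpr (by omega), Finset.mem_range.mpr hn⟩)
          rw [hpteq] at hmem
          refine ⟨(c', tauF T m c' 0), hmem, hc'1, ?_, ?_⟩
          · exact tau_le_of_lt hm h0c' hc't₂ h2T ha₂pos
          · have hval : 0 ≤ m c' (tauF T m c' 0) :=
              m_nonneg hm h0c' tau_ge_self (tau_le_T hc'T)
            dsimp only
            linarith
        · push_neg at hsub
          set K := ⌈(n:ℝ) * m c' t₂⌉₊ - 1 with hK
          have hceil2 : 2 ≤ ⌈(n:ℝ) * m c' t₂⌉₊ := by
            have h1 : (1:ℝ) < (n:ℝ) * m c' t₂ := by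
              have h0' : (1:ℝ) = n * (1/n) := by field_simp
              rw [h0']
              exact mul_lt_mul_of_pos_left hsub hn0
            exact Nat.lt_ceil.mpr (by exact_mod_cast h1)
          have hcK : ((K:ℕ):ℝ) = (⌈(n:ℝ) * m c' t₂⌉₊ : ℝ) - 1 := by
            rw [hK, Nat.cast_sub (by omega)]
            push_cast
            ring
          have hKn : K < n := by
            have h1 : ⌈(n:ℝ) * m c' t₂⌉₊ ≤ n := Nat.ceil_le.mpr (by nlinarith)
            omega
          have hylt : (K:ℝ)/n < m c' t₂ := by
            rw [div_lt_iff₀ hn0]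
            have h2 := Nat.ceil_lt_add_one (by positivity : (0:ℝ) ≤ (n:ℝ) * m c' t₂)
            nlinarith
          have hyge : m c' t₂ - 1/n ≤ (K:ℝ)/n := by
            rw [le_div_iff₀ hn0]
            have h1 : (n:ℝ) * m c' t₂ ≤ (⌈(n:ℝ) * m c' t₂⌉₊:ℝ) := Nat.le_ceil _
            have h3 : (m c' t₂ - 1/n) * n = (n:ℝ) * m c' t₂ - 1 := by field_simp
            linarith
          have hpteq : pt (j', K) = (c', tauF T m c' ((K:ℝ)/n)) := by
            rw [hc']
            simp [hpt, hj'0]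
          have hmem : pt (j', K) ∈ (Finset.range (J + 1) ×ˢ Finset.range n).image pt :=
            Finset.mem_image_of_mem pt (Finset.mem_product.mpr
              ⟨Finset.mem_range.mpr (by omega), Finset.mem_range.mpr hKn⟩)
          rw [hpteq] at hmem
          refine ⟨(c', tauF T m c' ((K:ℝ)/n)), hmem, hc'1, ?_, ?_⟩
          · exact tau_le_of_lt hm h0c' hc't₂ h2T hylt
          · dsimp only
            rcases lt_or_eq_of_le (tau_le_T (y := (K:ℝ)/n) hc'T) with hτT | hτT
            · have hvge : (K:ℝ)/n ≤ m c' (tauF T m c' ((K:ℝ)/n)) :=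
                tau_val_ge hC hr hm hHolder h0c' hτT
              linarith
            · have hτle : tauF T m c' ((K:ℝ)/n) ≤ t₂ := tau_le_of_lt hm h0c' hc't₂ h2T hylt
              have ht₂eq : t₂ = tauF T m c' ((K:ℝ)/n) := by
                refine le_antisymm ?_ hτle
                rw [hτT]
                exact h2T
              rw [← ht₂eq]
              linarith
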